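/- Let p be a prime with p ≡ 1 (mod 4) and let B be a perfect B[−1,3](p) set in Z_p. If i ∈ B, then 6i ∈ B or −6i ∈ B. -/
import Mathlib


/-- `B` is a perfect `B[-k₁,k₂](q)` set: every nonzero element of `ZMod q` is uniquely
`a * b` with `a ∈ [-k₁,k₂] \ {0}`, `b ∈ B`, and `(k₁+k₂) * |B| = q - 1`. -/
def IsPerfectSplitter (k₁ k₂ q : ℕ) (B : Finset (ZMod q)) : Prop :=
  (∀ g : ZMod q, g ≠ 0 → ∃! r : ℤ × ZMod q,
      r.1 ∈ Finset.Icc (-(k₁ : ℤ)) (k₂ : ℤ) ∧ r.1 ≠ 0 ∧ r.2 ∈ B ∧ (r.1 : ZMod q) * r.2 = g) ∧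
    (k₁ + k₂) * B.card = q - 1

theorem stmt17 (p : ℕ) (hp : p.Prime) (hmod : p % 4 = 1)
    (B : Finset (ZMod p)) (hB : IsPerfectSplitter 1 3 p B)
    (i : ZMod p) (hi : i ∈ B) :
    (6 : ZMod p) * i ∈ B ∨ (-6 : ZMod p) * i ∈ B := by
  by_cases hi0 : i = 0
  · left; rw [hi0, mul_zero]; rwa [hi0] at hi
  have hp5 : 5 ≤ p := by have := hp.two_le; omega
  haveI : Fact p.Prime := ⟨hp⟩
  haveI : NeZero p := ⟨hp.ne_zero⟩
  have h2 : (2 : ZMod p) ≠ 0 := by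
    intro h
    have : p ∣ 2 := by
      have := (ZMod.natCast_eq_zero_iff 2 p).mp (by exact_mod_cast h)
      exact this
    have := Nat.le_of_dvd (by norm_num) this
    omega
  have h3 : (3 : ZMod p) ≠ 0 := by
    intro h
    have : p ∣ 3 := (ZMod.natCast_eq_zero_iff 3 p).mp (by exact_mod_cast h)
    have := Nat.le_of_dvd (by norm_num) this
    omega
  have h6 : (6 : ZMod p) ≠ 0 := by
    have : (6 : ZMod p) = 2 * 3 := by norm_num
    rw [this]; exact mul_ne_zero h2 h3
  obtain ⟨⟨a, b⟩, ⟨ha, ha0, hbB, hab⟩, -⟩ := hB.1 ((6 : ZMod p) * i) (mul_ne_zero h6 hi0)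
  simp only [Finset.mem_Icc] at ha
  have ha1 : a = -1 ∨ a = 1 ∨ a = 2 ∨ a = 3 := by omega
  rcases ha1 with rfl | rfl | rfl | rfl
  · right
    have : b = -6 * i := by
      have : (((-1 : ℤ) : ZMod p)) * b = 6 * i := hab
      push_cast at this
      linear_combination -this
    rwa [this] at hbB
  · left
    have : b = 6 * i := by
      have : (((1 : ℤ) : ZMod p)) * b = 6 * i := hab
      push_cast at this
      linear_combination this
    rwa [this] at hbB
  · -- a = 2 : b = 3 i ∈ B, contradiction via uniqueness at 3 i
    exfalso
    have hb : b = 3 * i := by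
      have h : (((2 : ℤ) : ZMod p)) * b = 6 * i := hab
      push_cast at h
      have : (2 : ZMod p) * b = 2 * (3 * i) := by rw [h]; ring
      exact mul_left_cancel₀ h2 this
    rw [hb] at hbB
    obtain ⟨r, -, hu⟩ := hB.1 ((3 : ZMod p) * i) (mul_ne_zero h3 hi0)
    have e1 : ((1 : ℤ), (3 : ZMod p) * i) = r := by
      apply hu
      refine ⟨by simp, by norm_num, hbB, ?_⟩
      push_cast; ring
    have e2 : ((3 : ℤ), i) = r := by
      apply hu
      refine ⟨by simp, by norm_num, hi, ?_⟩
      push_cast; ring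
    have := e1.trans e2.symm
    simp at this
  · -- a = 3 : b = 2 i ∈ B, contradiction via uniqueness at 2 i
    exfalso
    have hb : b = 2 * i := by
      have h : (((3 : ℤ) : ZMod p)) * b = 6 * i := hab
      push_cast at h
      have : (3 : ZMod p) * b = 3 * (2 * i) := by rw [h]; ring
      exact mul_left_cancel₀ h3 this
    rw [hb] at hbB
    obtain ⟨r, -, hu⟩ := hB.1 ((2 : ZMod p) * i) (mul_ne_zero h2 hi0)
    have e1 : ((1 : ℤ), (2 : ZMod p) * i) = r := by
      apply hu
      refine ⟨by simp, by norm_num, hbB, ?_⟩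
      push_cast; ring
    have e2 : ((2 : ℤ), i) = r := by
      apply hu
      refine ⟨by simp, by norm_num, hi, ?_⟩
      push_cast; ring
    have := e1.trans e2.symm
    simp at this
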